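/- arXiv:1804.08943 — 2 statements merged into one kernel-verified Lean document; each statement's English description precedes it below -/
import Mathlib

section
/- The function (a,b) ↦ |b|^{γ'} / a^{(γ'-1)(1-α)} is convex on ℝ₊₊ × ℝ^d whenever 0 ≤ α < 1 < γ and γ' = γ/(γ-1). -/
open Real

/-- Two-term Hölder inequality. -/
lemma holder_two {p q : ℝ} (hpq : Real.HolderConjugate p q) {a b c d : ℝ}
    (ha : 0 ≤ a) (hb : 0 ≤ b) (hc : 0 ≤ c) (hd : 0 ≤ d) :
    a * c + b * d ≤ (a ^ p + b ^ p) ^ (1 / p) * (c ^ q + d ^ q) ^ (1 / q) := by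
  have := Real.inner_le_Lp_mul_Lq_of_nonneg (s := Finset.univ) (f := ![a, b]) (g := ![c, d])
    hpq (by intro i _; fin_cases i <;> assumption) (by intro i _; fin_cases i <;> assumption)
  simpa [Fin.sum_univ_two] using this

/-- Two-term concavity of `rpow` with exponent `s ≤ 1`. -/
lemma rpow_concave_two {s t u A A' : ℝ} (hs0 : 0 < s) (hs1 : s ≤ 1)
    (ht : 0 ≤ t) (hu : 0 ≤ u) (htu : t + u = 1) (hA : 0 ≤ A) (hA' : 0 ≤ A') :
    t * A ^ s + u * A' ^ s ≤ (t * A + u * A') ^ s := by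
  have h1s : 1 ≤ s⁻¹ := one_le_inv_iff₀.2 ⟨hs0, hs1⟩
  have key := Real.inner_le_weight_mul_Lp_of_nonneg (s := Finset.univ) (p := s⁻¹) h1s
    ![t, u] ![A ^ s, A' ^ s] (by intro i; fin_cases i <;> assumption)
    (by intro i; fin_cases i <;> exact Real.rpow_nonneg (by assumption) _)
  have e1 : (A ^ s) ^ s⁻¹ = A := by
    rw [← Real.rpow_mul hA, mul_inv_cancel₀ hs0.ne', Real.rpow_one]
  have e2 : (A' ^ s) ^ s⁻¹ = A' := by
    rw [← Real.rpow_mul hA', mul_inv_cancel₀ hs0.ne', Real.rpow_one]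
  simpa [Fin.sum_univ_two, htu, inv_inv, e1, e2, Real.one_rpow] using key

/-- Scalar key inequality: joint convexity of `(A,X) ↦ X^p / A^((p-1)s)`. -/
lemma key_scalar {p s : ℝ} (hp : 1 < p) (hs0 : 0 < s) (hs1 : s ≤ 1)
    {A A' X X' t u : ℝ} (hA : 0 < A) (hA' : 0 < A') (hX : 0 ≤ X) (hX' : 0 ≤ X')
    (ht : 0 ≤ t) (hu : 0 ≤ u) (htu : t + u = 1) :
    (t * X + u * X') ^ p / (t * A + u * A') ^ ((p - 1) * s) ≤
      t * (X ^ p / A ^ ((p - 1) * s)) + u * (X' ^ p / A' ^ ((p - 1) * s)) := by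
  have hp0 : (0:ℝ) < p := by linarith
  have hp1 : (0:ℝ) < p - 1 := by linarith
  set q : ℝ := (p - 1) * s with hq_def
  have hq0 : 0 < q := mul_pos hp1 hs0
  have hM : 0 < t * A + u * A' := by
    obtain h | h := ht.eq_or_lt
    · have hu1 : u = 1 := by linarith
      rw [← h, hu1]; simpa using hA'
    · nlinarith [mul_nonneg hu hA'.le]
  have hp' : Real.HolderConjugate p (p / (p - 1)) := .conjExponent hp
  set p' : ℝ := p / (p - 1) with hp'_def
  have hp'pos : 0 < p' := hp'.symm.pos
  have hqp' : s / p' = q / p := by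
    rw [hp'_def, hq_def]
    field_simp
  have hsum : 1 / p + 1 / p' = 1 := by
    rw [one_div, one_div]; exact hp'.inv_add_inv_eq_one
  set a : ℝ := (t * (X ^ p / A ^ q)) ^ (1 / p) with ha_def
  set b : ℝ := (u * (X' ^ p / A' ^ q)) ^ (1 / p) with hb_def
  set c : ℝ := (t * A ^ s) ^ (1 / p') with hc_def
  set d : ℝ := (u * A' ^ s) ^ (1 / p') with hd_def
  have hbase1 : 0 ≤ t * (X ^ p / A ^ q) := by positivity
  have hbase2 : 0 ≤ u * (X' ^ p / A' ^ q) := by positivity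
  have hbase3 : 0 ≤ t * A ^ s := by positivity
  have hbase4 : 0 ≤ u * A' ^ s := by positivity
  have hap : a ^ p = t * (X ^ p / A ^ q) := by
    rw [ha_def, ← Real.rpow_mul hbase1, one_div, inv_mul_cancel₀ hp0.ne', Real.rpow_one]
  have hbp : b ^ p = u * (X' ^ p / A' ^ q) := by
    rw [hb_def, ← Real.rpow_mul hbase2, one_div, inv_mul_cancel₀ hp0.ne', Real.rpow_one]
  have hcp : c ^ p' = t * A ^ s := by
    rw [hc_def, ← Real.rpow_mul hbase3, one_div, inv_mul_cancel₀ hp'pos.ne', Real.rpow_one]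
  have hdp : d ^ p' = u * A' ^ s := by
    rw [hd_def, ← Real.rpow_mul hbase4, one_div, inv_mul_cancel₀ hp'pos.ne', Real.rpow_one]
  have hApos : (0:ℝ) < A ^ (q / p) := Real.rpow_pos_of_pos hA _
  have hA'pos : (0:ℝ) < A' ^ (q / p) := Real.rpow_pos_of_pos hA' _
  have hweight : ∀ w : ℝ, 0 ≤ w → w ^ (1/p) * w ^ (1/p') = w := by
    intro w hw
    rw [← Real.rpow_add' hw (by rw [hsum]; norm_num), hsum, Real.rpow_one]
  have hXdiv : (X ^ p / A ^ q) ^ (1/p) = X / A ^ (q/p) := by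
    rw [Real.div_rpow (Real.rpow_nonneg hX _) (Real.rpow_nonneg hA.le _),
      ← Real.rpow_mul hX, ← Real.rpow_mul hA.le, mul_one_div, mul_one_div,
      div_self hp0.ne', Real.rpow_one]
  have hX'div : (X' ^ p / A' ^ q) ^ (1/p) = X' / A' ^ (q/p) := by
    rw [Real.div_rpow (Real.rpow_nonneg hX' _) (Real.rpow_nonneg hA'.le _),
      ← Real.rpow_mul hX', ← Real.rpow_mul hA'.le, mul_one_div, mul_one_div,
      div_self hp0.ne', Real.rpow_one]
  have hAs : (A ^ s) ^ (1/p') = A ^ (q/p) := by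
    rw [← Real.rpow_mul hA.le, mul_one_div, hqp']
  have hA's : (A' ^ s) ^ (1/p') = A' ^ (q/p) := by
    rw [← Real.rpow_mul hA'.le, mul_one_div, hqp']
  have hac : a * c = t * X := by
    rw [ha_def, hc_def, Real.mul_rpow ht (by positivity), Real.mul_rpow ht (by positivity),
      hXdiv, hAs, mul_mul_mul_comm, hweight t ht, div_mul_cancel₀ _ hApos.ne']
  have hbd : b * d = u * X' := by
    rw [hb_def, hd_def, Real.mul_rpow hu (by positivity), Real.mul_rpow hu (by positivity),
      hX'div, hA's, mul_mul_mul_comm, hweight u hu, div_mul_cancel₀ _ hA'pos.ne']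
  have hH := holder_two (a := a) (b := b) (c := c) (d := d) hp' (Real.rpow_nonneg hbase1 _) (Real.rpow_nonneg hbase2 _)
    (Real.rpow_nonneg hbase3 _) (Real.rpow_nonneg hbase4 _)
  rw [hac, hbd, hap, hbp, hcp, hdp] at hH
  set S : ℝ := t * (X ^ p / A ^ q) + u * (X' ^ p / A' ^ q) with hS_def
  have hS : 0 ≤ S := add_nonneg hbase1 hbase2
  have hC := rpow_concave_two hs0 hs1 ht hu htu hA.le hA'.le
  have h4 : t * X + u * X' ≤ S ^ (1/p) * ((t * A + u * A') ^ s) ^ (1/p') :=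
    le_trans hH (mul_le_mul_of_nonneg_left
      (Real.rpow_le_rpow (by positivity) hC (by positivity)) (Real.rpow_nonneg hS _))
  have h5 : ((t * A + u * A') ^ s) ^ (1/p') = (t * A + u * A') ^ (q/p) := by
    rw [← Real.rpow_mul hM.le, mul_one_div, hqp']
  rw [h5] at h4
  have hL : 0 ≤ t * X + u * X' := by positivity
  have hfinal : (t * X + u * X') ^ p ≤ S * (t * A + u * A') ^ q := by
    calc (t * X + u * X') ^ p ≤ (S ^ (1/p) * (t * A + u * A') ^ (q/p)) ^ p :=
          Real.rpow_le_rpow hL h4 hp0.le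
      _ = S * (t * A + u * A') ^ q := by
          rw [Real.mul_rpow (Real.rpow_nonneg hS _) (Real.rpow_nonneg hM.le _),
            ← Real.rpow_mul hS, ← Real.rpow_mul hM.le, one_div,
            inv_mul_cancel₀ hp0.ne', Real.rpow_one, div_mul_cancel₀ _ hp0.ne']
  rw [div_le_iff₀ (Real.rpow_pos_of_pos hM q)]
  exact hfinal

/-- The function `(a,b) ↦ ‖b‖^γ' / a^((γ'-1)(1-α))` is convex on `ℝ₊₊ × ℝ^d`
whenever `0 ≤ α < 1 < γ` and `γ' = γ/(γ-1)`. -/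
theorem convexOn_congestion_kinetic (d : ℕ) (α γ γ' : ℝ)
    (hα0 : 0 ≤ α) (hα1 : α < 1) (hγ : 1 < γ) (hγ' : γ' = γ / (γ - 1)) :
    ConvexOn ℝ {x : ℝ × EuclideanSpace ℝ (Fin d) | 0 < x.1}
      (fun x : ℝ × EuclideanSpace ℝ (Fin d) =>
        ‖x.2‖ ^ γ' / x.1 ^ ((γ' - 1) * (1 - α))) := by
  have hγ1 : (0:ℝ) < γ - 1 := by linarith
  have hp : 1 < γ' := by rw [hγ', one_lt_div hγ1]; linarith
  have hs0 : (0:ℝ) < 1 - α := by linarith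
  have hs1 : (1:ℝ) - α ≤ 1 := by linarith
  constructor
  · have hset : {x : ℝ × EuclideanSpace ℝ (Fin d) | 0 < x.1} =
        Set.Ioi (0:ℝ) ×ˢ (Set.univ : Set (EuclideanSpace ℝ (Fin d))) := by
      ext x; simp [Set.mem_prod]
    rw [hset]
    exact (convex_Ioi 0).prod convex_univ
  · rintro ⟨A, B⟩ hA ⟨A', B'⟩ hA' t u ht hu htu
    simp only [Set.mem_setOf_eq] at hA hA'
    have hM : 0 < t * A + u * A' := by
      obtain h | h := ht.eq_or_lt
      · have hu1 : u = 1 := by linarith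
        rw [← h, hu1]; simpa using hA'
      · nlinarith [mul_nonneg hu hA'.le]
    have hnorm : ‖t • B + u • B'‖ ≤ t * ‖B‖ + u * ‖B'‖ := by
      refine (norm_add_le _ _).trans ?_
      rw [norm_smul, norm_smul, Real.norm_of_nonneg ht, Real.norm_of_nonneg hu]
    have h2 := key_scalar (s := 1 - α) hp hs0 hs1 hA hA' (norm_nonneg B) (norm_nonneg B')
      ht hu htu
    simp only [Prod.smul_mk, Prod.mk_add_mk, smul_eq_mul]
    refine le_trans ?_ h2
    have hMq : 0 < (t * A + u * A') ^ ((γ' - 1) * (1 - α)) := Real.rpow_pos_of_pos hM _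
    exact (div_le_div_iff_of_pos_right hMq).2 (Real.rpow_le_rpow (norm_nonneg _) hnorm (by linarith))
end

section
/- The solution space of the linear ODE system μ' + a μ + a v = 0, −v' + a v − b μ = 0 among 1-periodic C¹ functions, where a = 4π² T̄, b = T̄ f'(1), T̄ = (−4π² − f'(1))^{−1/2}, and −8π² < f'(1) < −4π², is a two-dimensional real vector space spanned by (cos(2πt), (√(−4π²−f'(1))/(2π)) sin(2πt) − cos(2πt)) and (sin(2πt), −(√(−4π²−f'(1))/(2π)) cos(2πt) − sin(2πt)). -/
open Real

/-- generic trig combination has a derivative -/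
lemma auxTrig_hasDerivAt (A B t : ℝ) :
    HasDerivAt (fun t => A * Real.cos (2 * π * t) + B * Real.sin (2 * π * t))
      (2 * π * B * Real.cos (2 * π * t) - 2 * π * A * Real.sin (2 * π * t)) t := by
  have h : HasDerivAt (fun t : ℝ => 2 * π * t) (2 * π) t := by
    simpa using (hasDerivAt_id t).const_mul (2 * π)
  have hc := (Real.hasDerivAt_cos (2 * π * t)).comp t h
  have hs := (Real.hasDerivAt_sin (2 * π * t)).comp t h
  refine ((hc.const_mul A).add (hs.const_mul B)).congr_deriv ?_
  ring

lemma auxTrig_contDiff (A B : ℝ) :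
    ContDiff ℝ 1 (fun t => A * Real.cos (2 * π * t) + B * Real.sin (2 * π * t)) := by
  have h : ContDiff ℝ 1 (fun t : ℝ => 2 * π * t) := contDiff_const.mul contDiff_id
  exact ((Real.contDiff_cos.of_le le_top).comp h).const_smul A |>.add
    (((Real.contDiff_sin.of_le le_top).comp h).const_smul B)

noncomputable def odeL (a b : ℝ) : ℝ × ℝ →L[ℝ] ℝ × ℝ :=
  (((-a) • ContinuousLinearMap.fst ℝ ℝ ℝ) + ((-a) • ContinuousLinearMap.snd ℝ ℝ ℝ)).prod
    ((a • ContinuousLinearMap.snd ℝ ℝ ℝ) + ((-b) • ContinuousLinearMap.fst ℝ ℝ ℝ))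

lemma odeL_apply (a b : ℝ) (p : ℝ × ℝ) :
    odeL a b p = (-a * p.1 + -a * p.2, a * p.2 + -b * p.1) := by
  simp [odeL]

/-- The 1-periodic `C¹` solutions of the linearized system
`μ' + T̄λ₁ μ + T̄λ₁ v = 0`, `−v' + T̄λ₁ v − T̄ c μ = 0` (with `λ₁ = 4π²`,
`T̄ = (−4π² − c)^{−1/2}`, `−8π² < c < −4π²`) form a two-dimensional real vector space
spanned by the two explicit trigonometric solutions. -/
theorem linearized_kernel_description (c : ℝ)
    (hc1 : -8 * π ^ 2 < c) (hc2 : c < -4 * π ^ 2)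
    (Tbar a b : ℝ)
    (hT : Tbar = 1 / Real.sqrt (-4 * π ^ 2 - c))
    (ha : a = Tbar * (4 * π ^ 2)) (hb : b = Tbar * c)
    (f₁ f₂ : ℝ → ℝ × ℝ)
    (hf₁ : f₁ = fun t => (Real.cos (2 * π * t),
      Real.sqrt (-4 * π ^ 2 - c) / (2 * π) * Real.sin (2 * π * t) - Real.cos (2 * π * t)))
    (hf₂ : f₂ = fun t => (Real.sin (2 * π * t),
      -(Real.sqrt (-4 * π ^ 2 - c) / (2 * π)) * Real.cos (2 * π * t) - Real.sin (2 * π * t))) :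
    {w : ℝ → ℝ × ℝ |
        ContDiff ℝ 1 (fun t => (w t).1) ∧ ContDiff ℝ 1 (fun t => (w t).2) ∧
        (∀ t, w (t + 1) = w t) ∧
        (∀ t, deriv (fun s => (w s).1) t + a * (w t).1 + a * (w t).2 = 0) ∧
        (∀ t, -deriv (fun s => (w s).2) t + a * (w t).2 - b * (w t).1 = 0)} =
      (Submodule.span ℝ {f₁, f₂} : Submodule ℝ (ℝ → ℝ × ℝ)) ∧
    LinearIndependent ℝ ![f₁, f₂] := by
  have hπ : (0:ℝ) < π := Real.pi_pos
  have h2π : (2:ℝ) * π ≠ 0 := by positivity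
  set s := Real.sqrt (-4 * π ^ 2 - c) with hs_def
  have hpos : (0:ℝ) < -4 * π ^ 2 - c := by linarith
  have hs0 : 0 < s := Real.sqrt_pos.mpr hpos
  have hs_ne : s ≠ 0 := ne_of_gt hs0
  have hs2 : s * s = -4 * π ^ 2 - c := Real.mul_self_sqrt hpos.le
  have ha' : a * s = 4 * π ^ 2 := by
    rw [ha, hT]; field_simp
  have hsum : s + a + b = 0 := by
    rw [ha, hb, hT]; field_simp; linear_combination hs2
  set r := s / (2*π) with hr
  have hs_eq : s = 2*π*r := by rw [hr]; field_simp
  have har : a * r = 2*π := by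
    rw [hr]; rw [div_eq_iff h2π] at *; field_simp; linear_combination ha'
  have hsum2 : 2*π*r + a + b = 0 := by linear_combination hsum - hs_eq
  -- explicit form of linear combinations
  have hcomb_eq : ∀ x y : ℝ, (x • f₁ + y • f₂) = fun t =>
      (x * Real.cos (2*π*t) + y * Real.sin (2*π*t),
       (-x - y * (s / (2*π))) * Real.cos (2*π*t) + (x * (s / (2*π)) - y) * Real.sin (2*π*t)) := by
    intro x y; funext t
    simp only [hf₁, hf₂, Pi.add_apply, Pi.smul_apply, Prod.smul_mk, smul_eq_mul, Prod.mk_add_mk,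
      Prod.mk.injEq, hr]
    exact ⟨trivial, by ring⟩
  have hc1 : ∀ x y : ℝ, (fun t => ((x • f₁ + y • f₂) t).1)
      = fun t => x * Real.cos (2*π*t) + y * Real.sin (2*π*t) := by
    intro x y; funext t; rw [hcomb_eq x y]
  have hc2 : ∀ x y : ℝ, (fun t => ((x • f₁ + y • f₂) t).2)
      = fun t => (-x - y * (s / (2*π))) * Real.cos (2*π*t)
          + (x * (s / (2*π)) - y) * Real.sin (2*π*t) := by
    intro x y; funext t; rw [hcomb_eq x y]
  -- every linear combination satisfies all five conditions
  have hmem : ∀ x y : ℝ,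
      ContDiff ℝ 1 (fun t => ((x • f₁ + y • f₂) t).1) ∧
      ContDiff ℝ 1 (fun t => ((x • f₁ + y • f₂) t).2) ∧
      (∀ t, (x • f₁ + y • f₂) (t + 1) = (x • f₁ + y • f₂) t) ∧
      (∀ t, deriv (fun u => ((x • f₁ + y • f₂) u).1) t + a * ((x • f₁ + y • f₂) t).1
          + a * ((x • f₁ + y • f₂) t).2 = 0) ∧
      (∀ t, -deriv (fun u => ((x • f₁ + y • f₂) u).2) t + a * ((x • f₁ + y • f₂) t).2
          - b * ((x • f₁ + y • f₂) t).1 = 0) := by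
    intro x y
    refine ⟨?_, ?_, ?_, ?_, ?_⟩
    · rw [hc1]; exact auxTrig_contDiff x y
    · rw [hc2]; exact auxTrig_contDiff _ _
    · intro t
      have hp : 2*π*(t+1) = 2*π*t + 2*π := by ring
      simp only [hcomb_eq x y, hp, Real.cos_add_two_pi, Real.sin_add_two_pi]
    · intro t
      rw [hc1 x y, (auxTrig_hasDerivAt x y t).deriv, hcomb_eq x y]
      linear_combination (x * Real.sin (2*π*t) - y * Real.cos (2*π*t)) * har
    · intro t
      rw [hc2 x y, (auxTrig_hasDerivAt (-x - y * (s / (2*π))) (x * (s / (2*π)) - y) t).deriv,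
        hcomb_eq x y]
      linear_combination (-(x * Real.cos (2*π*t)) - y * Real.sin (2*π*t)) * hsum2
        + (x * Real.sin (2*π*t) - y * Real.cos (2*π*t)) * har
  -- solutions, viewed as ℝ×ℝ-valued curves, solve the ODE w' = L w
  have key : ∀ w : ℝ → ℝ × ℝ, ContDiff ℝ 1 (fun t => (w t).1) → ContDiff ℝ 1 (fun t => (w t).2) →
      (∀ t, deriv (fun u => (w u).1) t + a * (w t).1 + a * (w t).2 = 0) →
      (∀ t, -deriv (fun u => (w u).2) t + a * (w t).2 - b * (w t).1 = 0) →
      ∀ t, HasDerivAt w (odeL a b (w t)) t := by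
    intro w h1 h2 e1 e2 t
    have hd1 : HasDerivAt (fun u => (w u).1) (deriv (fun u => (w u).1) t) t :=
      ((h1.differentiable one_ne_zero) t).hasDerivAt
    have hd2 : HasDerivAt (fun u => (w u).2) (deriv (fun u => (w u).2) t) t :=
      ((h2.differentiable one_ne_zero) t).hasDerivAt
    have hprod := hd1.prodMk hd2
    have hw : (fun u => ((w u).1, (w u).2)) = w := by funext u; rfl
    rw [hw] at hprod
    have hval : ((deriv (fun u => (w u).1) t, deriv (fun u => (w u).2) t) : ℝ × ℝ)
        = odeL a b (w t) := by
      rw [odeL_apply, Prod.ext_iff]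
      constructor <;> simp <;> linarith [e1 t, e2 t]
    rwa [hval] at hprod
  constructor
  · ext w
    simp only [Set.mem_setOf_eq, SetLike.mem_coe, Submodule.mem_span_pair]
    constructor
    · rintro ⟨h1, h2, hper, e1, e2⟩
      refine ⟨(w 0).1, -(2*π/s) * ((w 0).2 + (w 0).1), ?_⟩
      set x := (w 0).1
      set y := -(2*π/s) * ((w 0).2 + x) with hy
      obtain ⟨g1, g2, gper, ge1, ge2⟩ := hmem x y
      have hg' := key _ g1 g2 ge1 ge2
      have hw' := key w h1 h2 e1 e2
      have hgc : Continuous (x • f₁ + y • f₂) :=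
        continuous_iff_continuousAt.mpr fun u => (hg' u).continuousAt
      have hwc : Continuous w := continuous_iff_continuousAt.mpr fun u => (hw' u).continuousAt
      have heq0 : (x • f₁ + y • f₂) 0 = w 0 := by
        rw [hcomb_eq x y]
        simp only [mul_zero, Real.cos_zero, Real.sin_zero]
        rw [Prod.ext_iff]
        constructor
        · simp [x]
        · simp only
          rw [hy]
          field_simp
          ring
      funext t
      have h0I : (0:ℝ) ∈ Set.Ioo (-(|t|+1)) (|t|+1) := by
        have := abs_nonneg t
        exact Set.mem_Ioo.mpr ⟨by linarith, by linarith⟩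
      have htI : t ∈ Set.Icc (-(|t|+1)) (|t|+1) :=
        ⟨by linarith [neg_abs_le t], by linarith [le_abs_self t]⟩
      exact (ODE_solution_unique_of_mem_Icc (v := fun _ p => odeL a b p)
        (s := fun _ => Set.univ) (fun _ _ => (odeL a b).lipschitz.lipschitzOnWith) h0I
        hgc.continuousOn (fun u _ => hg' u) (fun _ _ => trivial)
        hwc.continuousOn (fun u _ => hw' u) (fun _ _ => trivial) heq0) htI
    · rintro ⟨x, y, rfl⟩
      exact hmem x y
  · rw [LinearIndependent.pair_iff]
    intro p q hpq
    have h0 := congrFun hpq 0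
    simp only [hf₁, hf₂, Pi.add_apply, Pi.smul_apply, Prod.smul_mk, smul_eq_mul, mul_zero,
      Real.cos_zero, Real.sin_zero, Prod.mk_add_mk, Pi.zero_apply, Prod.mk_eq_zero,
      Prod.mk.injEq] at h0
    obtain ⟨h01, h02⟩ := h0
    have hp0 : p = 0 := by linarith
    refine ⟨hp0, ?_⟩
    rw [hp0] at h02
    have hsne : s / (2*π) ≠ 0 := by positivity
    have : q * (s / (2*π)) = 0 := by linarith
    rcases mul_eq_zero.mp this with h | h
    · exact h
    · exact absurd h hsne
end
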